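/- The subfield of ℂ generated over ℚ by the x- and y-coordinates of all nonzero points P ∈ E(ℂ) with 4·P = O equals K; in other words, the field of definition ℚ(E[4]) of the 4-torsion of E is K = ℚ(i, √2, √(1+i)). -/

import Mathlib

/-- The elliptic curve `E : y² = x³ + x² + x + 1` over `ℚ`. -/
def Ecurve : WeierstrassCurve ℚ := ⟨0, 1, 0, 1, 1⟩

/-- The base change of `E` to `ℂ`, as an affine Weierstrass curve. -/
noncomputable def EC : WeierstrassCurve.Affine ℂ := (Ecurve.baseChange ℂ).toAffine

/-- `K := ℚ(i, √2, √(1+i))` as a subfield of `ℂ`, given a fixed square root `s` of `1 + i`. -/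
noncomputable def Kfield (s : ℂ) : IntermediateField ℚ ℂ :=
  IntermediateField.adjoin ℚ {Complex.I, ((Real.sqrt 2 : ℝ) : ℂ), s}

open WeierstrassCurve.Affine WeierstrassCurve WeierstrassCurve.Affine.Point

lemma EC_a₁ : EC.a₁ = 0 := by simp [EC, Ecurve]
lemma EC_a₂ : EC.a₂ = 1 := by simp [EC, Ecurve]
lemma EC_a₃ : EC.a₃ = 0 := by simp [EC, Ecurve]
lemma EC_a₄ : EC.a₄ = 1 := by simp [EC, Ecurve]
lemma EC_a₆ : EC.a₆ = 1 := by simp [EC, Ecurve]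

lemma EC_Δ : EC.Δ ≠ 0 := by
  have h : EC.Δ = -256 := by
    rw [WeierstrassCurve.Δ, b₂, b₄, b₆, b₈, EC_a₁, EC_a₂, EC_a₃, EC_a₄, EC_a₆]; norm_num
  rw [h]; norm_num

lemma EC_nonsingular {x y : ℂ} (h : y ^ 2 = x ^ 3 + x ^ 2 + x + 1) : EC.Nonsingular x y := by
  refine (EC.equation_iff_nonsingular_of_Δ_ne_zero EC_Δ).mp ?_
  rw [equation_iff, EC_a₁, EC_a₂, EC_a₃, EC_a₄, EC_a₆]
  linear_combination h

lemma EC_equation {x y : ℂ} (h : EC.Nonsingular x y) : y ^ 2 = x ^ 3 + x ^ 2 + x + 1 := by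
  have h1 := h.1
  rw [equation_iff, EC_a₁, EC_a₂, EC_a₃, EC_a₄, EC_a₆] at h1
  linear_combination h1

lemma EC_negY (x y : ℂ) : EC.negY x y = -y := by rw [negY, EC_a₁, EC_a₃]; ring

lemma EC_ynegY {x y : ℂ} (hy : y ≠ 0) : y ≠ EC.negY x y := by
  rw [EC_negY]; intro hcon
  apply hy
  have h2 : (2:ℂ) * y = 0 := by linear_combination hcon
  simpa using h2

lemma EC_slope {x y : ℂ} (hy : y ≠ 0) :
    EC.slope x x y y = (3 * x ^ 2 + 2 * x + 1) / (2 * y) := by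
  rw [slope_of_Y_ne rfl (EC_ynegY hy), EC_negY, EC_a₁, EC_a₂, EC_a₄]
  ring_nf

lemma EC_double {x y X' : ℂ} (h : EC.Nonsingular x y) (h' : EC.Nonsingular X' 0) (hy : y ≠ 0)
    (hX : X' * (4 * y ^ 2) = (3 * x ^ 2 + 2 * x + 1) ^ 2 - (1 + 2 * x) * (4 * y ^ 2))
    (hY : (3 * x ^ 2 + 2 * x + 1) * (X' - x) + y * (2 * y) = 0) :
    Point.some _ _ h + Point.some _ _ h = Point.some _ _ h' := by
  rw [add_self_of_Y_ne (EC_ynegY hy)]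
  have hxc : EC.addX x x (EC.slope x x y y) = X' := by
    rw [addX, EC_slope hy, EC_a₁, EC_a₂]
    field_simp
    linear_combination -hX
  have hyc : EC.addY x x y (EC.slope x x y y) = 0 := by
    rw [addY, negAddY, EC_negY, hxc, EC_slope hy]
    field_simp
    linear_combination -hY
  simp only [Point.some.injEq]
  exact ⟨hxc, hyc⟩

lemma EC_four_of_two {x : ℂ} (h : EC.Nonsingular x 0) : 4 • Point.some _ _ h = 0 := by
  have h2 : Point.some _ _ h + Point.some _ _ h = 0 := add_self_of_Y_eq (by rw [EC_negY]; ring)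
  rw [show (4:ℕ) = 2+2 from rfl, add_nsmul, two_nsmul, h2, add_zero]

lemma EC_four_of_double {x y X' : ℂ} (h : EC.Nonsingular x y) (h' : EC.Nonsingular X' 0)
    (hy : y ≠ 0)
    (hX : X' * (4 * y ^ 2) = (3 * x ^ 2 + 2 * x + 1) ^ 2 - (1 + 2 * x) * (4 * y ^ 2))
    (hY : (3 * x ^ 2 + 2 * x + 1) * (X' - x) + y * (2 * y) = 0) :
    4 • Point.some _ _ h = 0 := by
  have hD := EC_double h h' hy hX hY
  have h2 : Point.some _ _ h' + Point.some _ _ h' = 0 := add_self_of_Y_eq (by rw [EC_negY]; ring)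
  rw [show (4:ℕ) = 2+2 from rfl, add_nsmul, two_nsmul, hD, h2]

lemma torsion_mem (s r2 : ℂ) (hs : s ^ 2 = 1 + Complex.I) (hr2 : r2 ^ 2 = 2)
    (K : IntermediateField ℚ ℂ) (hIK : Complex.I ∈ K) (hr2K : r2 ∈ K) (hsK : s ∈ K)
    {x y : ℂ} (h : EC.Nonsingular x y) (h4 : 4 • Point.some _ _ h = 0) :
    x ∈ K ∧ y ∈ K := by
  have heqy := EC_equation h
  rw [show (4:ℕ) = 2+2 from rfl, add_nsmul, two_nsmul] at h4
  by_cases hy0 : y = 0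
  · subst hy0
    have hfx : x ^ 3 + x ^ 2 + x + 1 = 0 := by linear_combination -heqy
    have hcube : (x + 1) * ((x - Complex.I) * (x + Complex.I)) = 0 := by
      linear_combination hfx + (-x - 1) * Complex.I_sq
    rcases mul_eq_zero.mp hcube with h1 | h1
    · have hxr : x = -1 := by linear_combination h1
      subst hxr
      exact ⟨neg_mem (one_mem K), zero_mem K⟩
    · rcases mul_eq_zero.mp h1 with h2 | h2
      · have hxr : x = Complex.I := by linear_combination h2
        subst hxr
        exact ⟨hIK, zero_mem K⟩
      · have hxr : x = -Complex.I := by linear_combination h2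
        subst hxr
        exact ⟨neg_mem hIK, zero_mem K⟩
  · have hynegY : y ≠ EC.negY x y := EC_ynegY hy0
    rw [add_self_of_Y_ne hynegY] at h4
    have hQ : EC.Nonsingular (EC.addX x x (EC.slope x x y y))
        (EC.addY x x y (EC.slope x x y y)) := nonsingular_add h h fun hxy => hynegY hxy.2
    have hYeq : EC.addY x x y (EC.slope x x y y) =
        EC.negY (EC.addX x x (EC.slope x x y y)) (EC.addY x x y (EC.slope x x y y)) := by
      by_contra hne
      rw [add_self_of_Y_ne hne] at h4
      exact some_ne_zero _ h4
    have hY0 : EC.addY x x y (EC.slope x x y y) = 0 := by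
      rw [EC_negY] at hYeq
      linear_combination (1/2 : ℂ) * hYeq
    have heqX := EC_equation hQ
    rw [hY0] at heqX
    obtain ⟨L, hL⟩ : ∃ L : ℂ, L = (3 * x ^ 2 + 2 * x + 1) / (2 * y) := ⟨_, rfl⟩
    have hL2 : L * (2 * y) = 3 * x ^ 2 + 2 * x + 1 := by
      rw [hL]; field_simp
    have he : EC.addX x x (EC.slope x x y y) = L ^ 2 - 1 - 2 * x := by
      rw [addX, EC_slope hy0, EC_a₁, EC_a₂, ← hL]; ring
    rw [he] at heqX
    have h1 : ((L ^ 2 - 1 - 2 * x) ^ 3 + (L ^ 2 - 1 - 2 * x) ^ 2 + (L ^ 2 - 1 - 2 * x) + 1)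
        * (2 * y) ^ 6 = 0 := by
      linear_combination (-(2 * y) ^ 6) * heqX
    have key : ((x ^ 2 + 2 * x - 1) * (x ^ 4 + 6 * x ^ 2 + 8 * x + 5)) ^ 2 = 0 := by
      linear_combination h1 + (728*x^9 + 2184*x^8 + 3392*x^7 - 1216*x^6*y^2 + 2816*x^6 - 2432*x^5*y^2 + 1328*x^5 - 2464*x^4*y^2 + 336*x^4 + 512*x^3*y^4 - 1152*x^3*y^2 + 256*x^3 + 512*x^2*y^4 - 256*x^2*y^2 + 192*x^2 + 256*x*y^4 + 56*x - 32*y^2 - 24) * heqy + (-243*x^10 - 810*x^9 - 162*x^8*y*L - 1485*x^8 + 648*x^7*y^2 - 432*x^7*y*L - 1800*x^7 - 108*x^6*y^2*L^2 + 1512*x^6*y^2 - 648*x^6*y*L - 1590*x^6 + 432*x^5*y^3*L - 216*x^5*y^2*L^2 + 1944*x^5*y^2 - 624*x^5*y*L - 1052*x^5 - 576*x^4*y^4 - 72*x^4*y^3*L^3 + 720*x^4*y^3*L - 252*x^4*y^2*L^2 + 1560*x^4*y^2 - 428*x^4*y*L - 530*x^4 + 288*x^3*y^4*L^2 - 768*x^3*y^4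 - 96*x^3*y^3*L^3 + 672*x^3*y^3*L - 176*x^3*y^2*L^2 + 856*x^3*y^2 - 208*x^3*y*L - 200*x^3 - 384*x^2*y^5*L - 48*x^2*y^4*L^4 + 288*x^2*y^4*L^2 - 544*x^2*y^4 - 80*x^2*y^3*L^3 + 352*x^2*y^3*L - 84*x^2*y^2*L^2 + 312*x^2*y^2 - 72*x^2*y*L - 55*x^2 + 192*x*y^5*L^3 - 256*x*y^5*L - 32*x*y^4*L^4 + 160*x*y^4*L^2 - 192*x*y^4 - 32*x*y^3*L^3 + 112*x*y^3*L - 24*x*y^2*L^2 + 72*x*y^2 - 16*x*y*L - 10*x - 32*y^5*L^5 + 64*y^5*L^3 - 64*y^5*L - 16*y^4*L^4 + 32*y^4*L^2 - 32*y^4 - 8*y^3*L^3 + 16*y^3*L - 4*y^2*L^2 + 8*y^2 - 2*y*L - 1) * hL2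
    have hg := sq_eq_zero_iff.mp key
    rcases mul_eq_zero.mp hg with hq | hq
    · have hfac : (x - (-1 + r2)) * (x - (-1 - r2)) = 0 := by
        linear_combination hq + (-1 : ℂ) * hr2
      rcases mul_eq_zero.mp hfac with hq0 | hq1
      · have hxr : x = (-1+r2) := by linear_combination hq0
        subst hxr
        have hyy : (y - Complex.I*s*(r2-1+Complex.I)) * (y + Complex.I*s*(r2-1+Complex.I)) = 0 := by
          linear_combination heqy + (-r2^2*Complex.I^2 - 2*r2*Complex.I^3 + 2*r2*Complex.I^2 - Complex.I^4 + 2*Complex.I^3 - Complex.I^2) * hs + (r2 - Complex.I^3 - Complex.I^2 - 2) * hr2 + (-2*r2*Complex.I^2 + 4*r2 - Complex.I^3 + Complex.I^2 - 4) * Complex.I_sq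
        rcases mul_eq_zero.mp hyy with hy1 | hy1
        · have hyr : y = Complex.I*s*(r2-1+Complex.I) := by linear_combination hy1
          subst hyr
          exact ⟨add_mem (neg_mem (one_mem K)) hr2K, mul_mem (mul_mem hIK hsK) (add_mem (sub_mem hr2K (one_mem K)) hIK)⟩
        · have hyr : y = -(Complex.I*s*(r2-1+Complex.I)) := by linear_combination hy1
          subst hyr
          exact ⟨add_mem (neg_mem (one_mem K)) hr2K, neg_mem (mul_mem (mul_mem hIK hsK) (add_mem (sub_mem hr2K (one_mem K)) hIK))⟩
      · have hxr : x = (-1-r2) := by linear_combination hq1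
        subst hxr
        have hyy : (y - Complex.I*s*(r2+1-Complex.I)) * (y + Complex.I*s*(r2+1-Complex.I)) = 0 := by
          linear_combination heqy + (-r2^2*Complex.I^2 + 2*r2*Complex.I^3 - 2*r2*Complex.I^2 - Complex.I^4 + 2*Complex.I^3 - Complex.I^2) * hs + (-r2 - Complex.I^3 - Complex.I^2 - 2) * hr2 + (2*r2*Complex.I^2 - 4*r2 - Complex.I^3 + Complex.I^2 - 4) * Complex.I_sq
        rcases mul_eq_zero.mp hyy with hy1 | hy1
        · have hyr : y = Complex.I*s*(r2+1-Complex.I) := by linear_combination hy1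
          subst hyr
          exact ⟨sub_mem (neg_mem (one_mem K)) hr2K, mul_mem (mul_mem hIK hsK) (sub_mem (add_mem hr2K (one_mem K)) hIK)⟩
        · have hyr : y = -(Complex.I*s*(r2+1-Complex.I)) := by linear_combination hy1
          subst hyr
          exact ⟨sub_mem (neg_mem (one_mem K)) hr2K, neg_mem (mul_mem (mul_mem hIK hsK) (sub_mem (add_mem hr2K (one_mem K)) hIK))⟩
    · have hfac : (x-(Complex.I+(1+Complex.I)*s))*((x-(Complex.I-(1+Complex.I)*s))*((x-(-Complex.I+Complex.I*r2*s))*(x-(-Complex.I-Complex.I*r2*s)))) = 0 := by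
        linear_combination hq + (-x^2*r2^2*Complex.I^2 - x^2*Complex.I^2 - 2*x^2*Complex.I - x^2 + 2*x*r2^2*Complex.I^3 - 2*x*Complex.I^3 - 4*x*Complex.I^2 - 2*x*Complex.I + s^2*r2^2*Complex.I^4 + 2*s^2*r2^2*Complex.I^3 + s^2*r2^2*Complex.I^2 + r2^2*Complex.I^5 + 2*r2^2*Complex.I^4 + 3*r2^2*Complex.I^3 + r2^2*Complex.I^2 - Complex.I^4 - 2*Complex.I^3 - Complex.I^2) * hs + (-x^2*Complex.I^3 - x^2*Complex.I^2 + 2*x*Complex.I^4 + 2*x*Complex.I^3 + Complex.I^6 + 3*Complex.I^5 + 5*Complex.I^4 + 4*Complex.I^3 + Complex.I^2) * hr2 + (-3*x^2*Complex.I - 7*x^2 + 2*x*Complex.I^2 - 2*x*Complex.I - 8*x + 2*Complex.I^4 + 5*Complex.I^3 + 6*Complex.I^2 - 5) * Complex.I_sq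
      rcases mul_eq_zero.mp hfac with hq2 | hrest
      · have hxr : x = (Complex.I+(1+Complex.I)*s) := by linear_combination hq2
        subst hxr
        have hyy : (y - (Complex.I+Complex.I)*(1+s)) * (y + (Complex.I+Complex.I)*(1+s)) = 0 := by
          linear_combination heqy + (s*Complex.I^3 + 3*s*Complex.I^2 + 3*s*Complex.I + s + 3*Complex.I^3 + 3*Complex.I^2 + 5*Complex.I + 1) * hs + (s*Complex.I^2 + 7*s*Complex.I + 2*s + 3*Complex.I^2 + 7*Complex.I + 2) * Complex.I_sq
        rcases mul_eq_zero.mp hyy with hy1 | hy1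
        · have hyr : y = (Complex.I+Complex.I)*(1+s) := by linear_combination hy1
          subst hyr
          exact ⟨add_mem hIK (mul_mem (add_mem (one_mem K) hIK) hsK), mul_mem (add_mem hIK hIK) (add_mem (one_mem K) hsK)⟩
        · have hyr : y = -((Complex.I+Complex.I)*(1+s)) := by linear_combination hy1
          subst hyr
          exact ⟨add_mem hIK (mul_mem (add_mem (one_mem K) hIK) hsK), neg_mem (mul_mem (add_mem hIK hIK) (add_mem (one_mem K) hsK))⟩
      · rcases mul_eq_zero.mp hrest with hq3 | hrest2
        · have hxr : x = (Complex.I-(1+Complex.I)*s) := by linear_combination hq3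
          subst hxr
          have hyy : (y - (Complex.I+Complex.I)*(1-s)) * (y + (Complex.I+Complex.I)*(1-s)) = 0 := by
            linear_combination heqy + (-s*Complex.I^3 - 3*s*Complex.I^2 - 3*s*Complex.I - s + 3*Complex.I^3 + 3*Complex.I^2 + 5*Complex.I + 1) * hs + (-s*Complex.I^2 - 7*s*Complex.I - 2*s + 3*Complex.I^2 + 7*Complex.I + 2) * Complex.I_sq
          rcases mul_eq_zero.mp hyy with hy1 | hy1
          · have hyr : y = (Complex.I+Complex.I)*(1-s) := by linear_combination hy1
            subst hyr
            exact ⟨sub_mem hIK (mul_mem (add_mem (one_mem K) hIK) hsK), mul_mem (add_mem hIK hIK) (sub_mem (one_mem K) hsK)⟩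
          · have hyr : y = -((Complex.I+Complex.I)*(1-s)) := by linear_combination hy1
            subst hyr
            exact ⟨sub_mem hIK (mul_mem (add_mem (one_mem K) hIK) hsK), neg_mem (mul_mem (add_mem hIK hIK) (sub_mem (one_mem K) hsK))⟩
        · rcases mul_eq_zero.mp hrest2 with hq4 | hq5
          · have hxr : x = (-Complex.I+Complex.I*r2*s) := by linear_combination hq4
            subst hxr
            have hyy : (y - (-(Complex.I+Complex.I)+(1+Complex.I)*r2*s)) * (y + (-(Complex.I+Complex.I)+(1+Complex.I)*r2*s)) = 0 := by
              linear_combination heqy + (s*r2^3*Complex.I^3 - 3*r2^2*Complex.I^3 - 2*r2^2*Complex.I - r2^2) * hs + (s*r2*Complex.I^4 + s*r2*Complex.I^3 - 3*Complex.I^4 - 3*Complex.I^3 - 2*Complex.I^2 - 3*Complex.I - 1) * hr2 + (2*s*r2*Complex.I^2 + 5*s*r2*Complex.I - 6*Complex.I^2 - 7*Complex.I - 1) * Complex.I_sq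
            rcases mul_eq_zero.mp hyy with hy1 | hy1
            · have hyr : y = (-(Complex.I+Complex.I)+(1+Complex.I)*r2*s) := by linear_combination hy1
              subst hyr
              exact ⟨add_mem (neg_mem hIK) (mul_mem (mul_mem hIK hr2K) hsK), add_mem (neg_mem (add_mem hIK hIK)) (mul_mem (mul_mem (add_mem (one_mem K) hIK) hr2K) hsK)⟩
            · have hyr : y = -((-(Complex.I+Complex.I)+(1+Complex.I)*r2*s)) := by linear_combination hy1
              subst hyr
              exact ⟨add_mem (neg_mem hIK) (mul_mem (mul_mem hIK hr2K) hsK), neg_mem (add_mem (neg_mem (add_mem hIK hIK)) (mul_mem (mul_mem (add_mem (one_mem K) hIK) hr2K) hsK))⟩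
          · have hxr : x = (-Complex.I-Complex.I*r2*s) := by linear_combination hq5
            subst hxr
            have hyy : (y - (-(Complex.I+Complex.I)-(1+Complex.I)*r2*s)) * (y + (-(Complex.I+Complex.I)-(1+Complex.I)*r2*s)) = 0 := by
              linear_combination heqy + (-s*r2^3*Complex.I^3 - 3*r2^2*Complex.I^3 - 2*r2^2*Complex.I - r2^2) * hs + (-s*r2*Complex.I^4 - s*r2*Complex.I^3 - 3*Complex.I^4 - 3*Complex.I^3 - 2*Complex.I^2 - 3*Complex.I - 1) * hr2 + (-2*s*r2*Complex.I^2 - 5*s*r2*Complex.I - 6*Complex.I^2 - 7*Complex.I - 1) * Complex.I_sq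
            rcases mul_eq_zero.mp hyy with hy1 | hy1
            · have hyr : y = (-(Complex.I+Complex.I)-(1+Complex.I)*r2*s) := by linear_combination hy1
              subst hyr
              exact ⟨sub_mem (neg_mem hIK) (mul_mem (mul_mem hIK hr2K) hsK), sub_mem (neg_mem (add_mem hIK hIK)) (mul_mem (mul_mem (add_mem (one_mem K) hIK) hr2K) hsK)⟩
            · have hyr : y = -((-(Complex.I+Complex.I)-(1+Complex.I)*r2*s)) := by linear_combination hy1
              subst hyr
              exact ⟨sub_mem (neg_mem hIK) (mul_mem (mul_mem hIK hr2K) hsK), neg_mem (sub_mem (neg_mem (add_mem hIK hIK)) (mul_mem (mul_mem (add_mem (one_mem K) hIK) hr2K) hsK))⟩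

/-- The subfield of `ℂ` generated over `ℚ` by the coordinates of the nonzero points
`P ∈ E(ℂ)` with `4·P = O` equals `K = ℚ(i, √2, √(1+i))`, i.e. `ℚ(E[4]) = K`. -/
theorem four_torsion_field (s : ℂ) (hs : s ^ 2 = 1 + Complex.I) :
    IntermediateField.adjoin ℚ
      {z : ℂ | ∃ (x y : ℂ) (h : EC.Nonsingular x y),
        4 • (WeierstrassCurve.Affine.Point.some x y h) = (0 : EC.Point) ∧ (z = x ∨ z = y)} =
      Kfield s := by
  have hr2 : ((Real.sqrt 2 : ℝ) : ℂ) ^ 2 = 2 := by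
    rw [← Complex.ofReal_pow, Real.sq_sqrt (by norm_num : (0:ℝ) ≤ 2)]
    norm_num
  set r2 : ℂ := ((Real.sqrt 2 : ℝ) : ℂ) with hr2def
  apply le_antisymm
  · rw [IntermediateField.adjoin_le_iff]
    have hIK : Complex.I ∈ Kfield s := by
      unfold Kfield; exact IntermediateField.subset_adjoin ℚ _ (by simp)
    have hr2K : r2 ∈ Kfield s := by
      unfold Kfield; exact IntermediateField.subset_adjoin ℚ _ (by simp only [Set.mem_insert_iff, Set.mem_singleton_iff]; exact Or.inr (Or.inl hr2def))
    have hsK : s ∈ Kfield s := by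
      unfold Kfield; exact IntermediateField.subset_adjoin ℚ _ (by simp)
    rintro z ⟨x, y, h, h4, (rfl | rfl)⟩
    · exact (torsion_mem s r2 hs hr2 (Kfield s) hIK hr2K hsK h h4).1
    · exact (torsion_mem s r2 hs hr2 (Kfield s) hIK hr2K hsK h h4).2
  · have hT : EC.Nonsingular Complex.I 0 := EC_nonsingular (by
      linear_combination (-Complex.I - 1) * Complex.I_sq)
    have hIA : Complex.I ∈ IntermediateField.adjoin ℚ
        {z : ℂ | ∃ (x y : ℂ) (h : EC.Nonsingular x y),
          4 • (WeierstrassCurve.Affine.Point.some x y h) = (0 : EC.Point) ∧ (z = x ∨ z = y)} :=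
      IntermediateField.subset_adjoin ℚ _ ⟨Complex.I, 0, hT, EC_four_of_two hT, Or.inl rfl⟩
    have hsne : s ≠ 0 := by
      intro h0; rw [h0] at hs; norm_num [Complex.ext_iff] at hs
    have hcne : r2 - 1 + Complex.I ≠ 0 := by
      intro hcon
      have hI1 : Complex.I = -1 := by
        linear_combination ((r2 + 1 - Complex.I)/2) * hcon - (1/2 : ℂ) * hr2
          + (1/2 : ℂ) * Complex.I_sq
      simp [Complex.ext_iff] at hI1
    have hy1ne : Complex.I * s * (r2 - 1 + Complex.I) ≠ 0 :=
      mul_ne_zero (mul_ne_zero Complex.I_ne_zero hsne) hcne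
    have hP1 : EC.Nonsingular (-1 + r2) (Complex.I * s * (r2 - 1 + Complex.I)) :=
      EC_nonsingular (by linear_combination (r2^2*Complex.I^2 + 2*r2*Complex.I^3 - 2*r2*Complex.I^2 + Complex.I^4 - 2*Complex.I^3 + Complex.I^2) * hs + (-r2 + Complex.I^3 + Complex.I^2 + 2) * hr2 + (2*r2*Complex.I^2 - 4*r2 + Complex.I^3 - Complex.I^2 + 4) * Complex.I_sq)
    have hT1 : EC.Nonsingular (-1) 0 := EC_nonsingular (by norm_num)
    have h41 := EC_four_of_double hP1 hT1 hy1ne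
      (by linear_combination (8*r2^3*Complex.I^2 + 16*r2^2*Complex.I^3 - 24*r2^2*Complex.I^2 + 8*r2*Complex.I^4 - 32*r2*Complex.I^3 + 24*r2*Complex.I^2 - 8*Complex.I^4 + 16*Complex.I^3 - 8*Complex.I^2) * hs + (-9*r2^2 + 8*r2*Complex.I^3 + 8*r2*Complex.I^2 + 24*r2 + 16*Complex.I^4 - 8*Complex.I^3 - 24*Complex.I^2 - 46) * hr2 + (8*r2*Complex.I^3 - 24*r2*Complex.I^2 + 64*r2 - 8*Complex.I^3 + 40*Complex.I^2 - 96) * Complex.I_sq)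
      (by linear_combination (2*r2^2*Complex.I^2 + 4*r2*Complex.I^3 - 4*r2*Complex.I^2 + 2*Complex.I^4 - 4*Complex.I^3 + 2*Complex.I^2) * hs + (-3*r2 + 2*Complex.I^3 + 2*Complex.I^2 + 4) * hr2 + (4*r2*Complex.I^2 - 8*r2 + 2*Complex.I^3 - 2*Complex.I^2 + 8) * Complex.I_sq)
    have hx1A : (-1 + r2 : ℂ) ∈ IntermediateField.adjoin ℚ
        {z : ℂ | ∃ (x y : ℂ) (h : EC.Nonsingular x y),
          4 • (WeierstrassCurve.Affine.Point.some x y h) = (0 : EC.Point) ∧ (z = x ∨ z = y)} :=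
      IntermediateField.subset_adjoin ℚ _ ⟨_, _, hP1, h41, Or.inl rfl⟩
    have hr2A : r2 ∈ IntermediateField.adjoin ℚ
        {z : ℂ | ∃ (x y : ℂ) (h : EC.Nonsingular x y),
          4 • (WeierstrassCurve.Affine.Point.some x y h) = (0 : EC.Point) ∧ (z = x ∨ z = y)} := by
      have he : r2 = (-1 + r2) + 1 := by ring
      rw [he]; exact add_mem hx1A (one_mem _)
    have h1sne : (1 : ℂ) + s ≠ 0 := by
      intro hcon
      have hI0 : Complex.I = 0 := by linear_combination (s - 1) * hcon - hs
      exact Complex.I_ne_zero hI0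
    have hy2ne : 2 * Complex.I * (1 + s) ≠ 0 :=
      mul_ne_zero (mul_ne_zero two_ne_zero Complex.I_ne_zero) h1sne
    have hP2 : EC.Nonsingular (Complex.I + (1 + Complex.I) * s) (2 * Complex.I * (1 + s)) :=
      EC_nonsingular (by linear_combination (-s*Complex.I^3 - 3*s*Complex.I^2 - 3*s*Complex.I - s - 3*Complex.I^3 - 3*Complex.I^2 - 5*Complex.I - 1) * hs + (-s*Complex.I^2 - 7*s*Complex.I - 2*s - 3*Complex.I^2 - 7*Complex.I - 2) * Complex.I_sq)
    have h42 := EC_four_of_double hP2 hT hy2ne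
      (by linear_combination (-9*s^2*Complex.I^4 - 36*s^2*Complex.I^3 - 54*s^2*Complex.I^2 - 36*s^2*Complex.I - 9*s^2 - 36*s*Complex.I^4 - 88*s*Complex.I^3 - 112*s*Complex.I^2 - 72*s*Complex.I - 12*s - 9*Complex.I^5 - 99*Complex.I^4 - 122*Complex.I^3 - 146*Complex.I^2 - 101*Complex.I - 19) * hs + (-36*s*Complex.I^3 - 160*s*Complex.I^2 - 108*s*Complex.I - 16*s - 9*Complex.I^4 - 108*Complex.I^3 - 221*Complex.I^2 - 124*Complex.I - 20) * Complex.I_sq)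
      (by linear_combination (-3*s*Complex.I^3 - 9*s*Complex.I^2 - 9*s*Complex.I - 3*s - 6*Complex.I^3 - 6*Complex.I^2 - 10*Complex.I - 2) * hs + (-3*s*Complex.I^2 - 15*s*Complex.I - 4*s - 6*Complex.I^2 - 12*Complex.I - 2) * Complex.I_sq)
    have hx2A : (Complex.I + (1 + Complex.I) * s) ∈ IntermediateField.adjoin ℚ
        {z : ℂ | ∃ (x y : ℂ) (h : EC.Nonsingular x y),
          4 • (WeierstrassCurve.Affine.Point.some x y h) = (0 : EC.Point) ∧ (z = x ∨ z = y)} :=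
      IntermediateField.subset_adjoin ℚ _ ⟨_, _, hP2, h42, Or.inl rfl⟩
    have h2A : (2 : ℂ) ∈ IntermediateField.adjoin ℚ
        {z : ℂ | ∃ (x y : ℂ) (h : EC.Nonsingular x y),
          4 • (WeierstrassCurve.Affine.Point.some x y h) = (0 : EC.Point) ∧ (z = x ∨ z = y)} := by
      rw [show (2:ℂ) = 1 + 1 by norm_num]; exact add_mem (one_mem _) (one_mem _)
    have hsA : s ∈ IntermediateField.adjoin ℚ
        {z : ℂ | ∃ (x y : ℂ) (h : EC.Nonsingular x y),
          4 • (WeierstrassCurve.Affine.Point.some x y h) = (0 : EC.Point) ∧ (z = x ∨ z = y)} := by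
      have he : s = ((Complex.I + (1 + Complex.I) * s) - Complex.I) * (1 - Complex.I) / 2 := by
        linear_combination (s/2) * Complex.I_sq
      rw [he]
      exact div_mem (mul_mem (sub_mem hx2A hIA) (sub_mem (one_mem _) hIA)) h2A
    rw [Kfield, IntermediateField.adjoin_le_iff]
    rintro z hz
    simp only [Set.mem_insert_iff, Set.mem_singleton_iff] at hz
    rcases hz with rfl | rfl | rfl
    · exact hIA
    · exact hr2A
    · exact hsA
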